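/- arXiv:0803.0855 — 2 statements merged into one kernel-verified Lean document; each statement's English description precedes it below -/
import Mathlib

section
/- Let G be a connected weighted multigraph in which every vertex has valence ≥ 2, polarized by q ≡ 0, of genus g = m − n + 1 ≥ 2, and let e_1 be a non-loop edge. Then for all fixed positive lengths ℓ_2,…,ℓ_m, lim_{t→0+} φ_G(t, ℓ_2,…,ℓ_m) = φ_{G/e_1}(ℓ_2,…,ℓ_m), where G/e_1 carries the polarization q ≡ 0 (and has the same genus g). -/
open scoped Classical
open Matrix Filter Topology

/-- A weighted multigraph with vertex type `V` and edge index type `E`: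
each edge is assigned an (ordered representative of an unordered) pair of endpoints. -/
structure WMG (V E : Type) where
  ends : E → V × V

namespace WMG

variable {V E : Type} [Fintype V] [DecidableEq V] [Fintype E] [DecidableEq E]

/-- `a` and `b` are joined by some edge belonging to `S`. -/
def Step (G : WMG V E) (S : Set E) (a b : V) : Prop :=
  ∃ k ∈ S, G.ends k = (a, b) ∨ G.ends k = (b, a)

/-- Any two vertices can be joined by a walk using only edges from `S`. -/
def ConnectedVia (G : WMG V E) (S : Set E) : Prop :=
  ∀ a b : V, Relation.ReflTransGen (G.Step S) a b

/-- `G` is connected. -/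
def Connected (G : WMG V E) : Prop := G.ConnectedVia Set.univ

/-- A set `T` of edges is a spanning tree: it has `#V - 1` edges and connects all vertices. -/
def IsSpanningTree (G : WMG V E) (T : Finset E) : Prop :=
  T.card + 1 = Fintype.card V ∧ G.ConnectedVia ↑T

/-- `η_G(ℓ) = Σ_{T spanning tree} Π_{k ∉ T} ℓ_k`. -/
noncomputable def eta (G : WMG V E) (ℓ : E → ℝ) : ℝ :=
  ∑ T : Finset E, if G.IsSpanningTree T then ∏ k ∈ Tᶜ, ℓ k else 0

/-- The weighted Laplacian matrix of `G`. -/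
noncomputable def lap (G : WMG V E) (ℓ : E → ℝ) : Matrix V V ℝ :=
  Matrix.of fun a b =>
    if a = b then
      ∑ k : E, if ((G.ends k).1 = a ∨ (G.ends k).2 = a) ∧ (G.ends k).1 ≠ (G.ends k).2
        then (ℓ k)⁻¹ else 0
    else
      - ∑ k : E, if G.ends k = (a, b) ∨ G.ends k = (b, a) then (ℓ k)⁻¹ else 0

/-- The standard basis vector (point mass) at a vertex. -/
def delta (a : V) : V → ℝ := fun x => if x = a then 1 else 0

/-- Effective resistance `r(a,b)`: the entry at `a` of the unique solution `h` of
`Q^{(b)} h = u_a` (the Laplacian with row and column `b` deleted).  Equivalently, writing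
`h̃` for the extension of `h` by `h̃ b = 0`, it is the entry at `a` of the unique `v` with
`Q v = δ_a - δ_b` and `v b = 0` (the two systems have the same solutions since all row and
column sums of `Q` vanish).  We set `r(a,a) = 0`; this is automatic in the connected case. -/
noncomputable def res (G : WMG V E) (ℓ : E → ℝ) (a b : V) : ℝ :=
  if h : ∃! v : V → ℝ, G.lap ℓ *ᵥ v = delta a - delta b ∧ v b = 0
  then h.exists.choose a else 0

/-- The valence of a vertex (loop edges counted twice). -/
def valence (G : WMG V E) (a : V) : ℕ :=
  ∑ k : E, ((if (G.ends k).1 = a then 1 else 0) + (if (G.ends k).2 = a then 1 else 0))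

/-- The genus of the polarized graph `(G, q)`: `g = #E - #V + 1 + Σ_a q(a)`. -/
def genus (G : WMG V E) (q : V → ℕ) : ℤ :=
  (Fintype.card E : ℤ) - (Fintype.card V : ℤ) + 1 + ∑ a, (q a : ℤ)

/-- The canonical divisor `K(a) = 2 q(a) + v(a) - 2`, as a real number. -/
noncomputable def Kdiv (G : WMG V E) (q : V → ℕ) (a : V) : ℝ :=
  2 * (q a : ℝ) + (G.valence a : ℝ) - 2

/-- `F(e_k) = 1 - r(e_k)/ℓ_k` where `r(e_k)` is the resistance between the endpoints. -/
noncomputable def Fres (G : WMG V E) (ℓ : E → ℝ) (k : E) : ℝ :=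
  1 - G.res ℓ (G.ends k).1 (G.ends k).2 / ℓ k

/-- Zhang's invariant `ε` of the polarized metric graph, via the paper's explicit formula. -/
noncomputable def epsilon (G : WMG V E) (q : V → ℕ) (ℓ : E → ℝ) : ℝ :=
  (1 / (G.genus q : ℝ)) * ∑ a, ∑ b, (q a : ℝ) * G.Kdiv q b * G.res ℓ a b
  + (((G.genus q : ℝ) - 1) / (3 * (G.genus q : ℝ))) * ∑ k, (G.Fres ℓ k) ^ 2 * ℓ k
  + (1 / (2 * (G.genus q : ℝ))) * ∑ a, G.Kdiv q a *
      ∑ k, G.Fres ℓ k * (G.res ℓ a (G.ends k).1 + G.res ℓ a (G.ends k).2)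

/-- `r(K, K) = Σ_{a,b} K(a) K(b) r(a,b)`. -/
noncomputable def rKK (G : WMG V E) (q : V → ℕ) (ℓ : E → ℝ) : ℝ :=
  ∑ a, ∑ b, G.Kdiv q a * G.Kdiv q b * G.res ℓ a b

/-- Zhang's invariant `φ` of the polarized metric graph, via the paper's explicit formula
`φ = ((5g-2)/(4(g-1))) ε - (3/(8(g-1))) r(K,K) - ℓ(G)/4`. -/
noncomputable def phi (G : WMG V E) (q : V → ℕ) (ℓ : E → ℝ) : ℝ :=
  ((5 * (G.genus q : ℝ) - 2) / (4 * ((G.genus q : ℝ) - 1))) * G.epsilon q ℓ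
  - (3 / (8 * ((G.genus q : ℝ) - 1))) * G.rKK q ℓ
  - (∑ k, ℓ k) / 4

/-- The map on vertices identifying `b` with `a` (realized on the subtype omitting `b`). -/
def fuseV (a b : V) (hab : a ≠ b) (x : V) : {y : V // y ≠ b} :=
  if h : x = b then ⟨a, hab⟩ else ⟨x, h⟩

/-- The fusion `G'` of two distinct vertices `a, b` of `G`: identify `a` and `b`,
keeping all edges and lengths. -/
def fuse (G : WMG V E) (a b : V) (hab : a ≠ b) : WMG {y : V // y ≠ b} E :=
  ⟨fun k => (fuseV a b hab (G.ends k).1, fuseV a b hab (G.ends k).2)⟩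

/-- The contraction `G/e` of a non-loop edge: identify the two endpoints of `e`,
delete `e`, and keep all other edges. -/
def contract (G : WMG V E) (k0 : E) (hk : (G.ends k0).1 ≠ (G.ends k0).2) :
    WMG {y : V // y ≠ (G.ends k0).2} {k : E // k ≠ k0} :=
  ⟨fun k => (fuseV (G.ends k0).1 (G.ends k0).2 hk (G.ends k.1).1,
             fuseV (G.ends k0).1 (G.ends k0).2 hk (G.ends k.1).2)⟩

end WMG

/-- The `i`-th elementary symmetric polynomial of the family `ℓ`. -/
noncomputable def esymE {E : Type} [Fintype E] [DecidableEq E] (i : ℕ) (ℓ : E → ℝ) : ℝ :=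
  ∑ s ∈ Finset.powersetCard i (Finset.univ : Finset E), ∏ k ∈ s, ℓ k

namespace WMG
variable {V E : Type} [Fintype V] [DecidableEq V] [Fintype E] [DecidableEq E]

theorem lap_mulVec (G : WMG V E) (ℓ : E → ℝ) (v : V → ℝ) (x : V) :
    (G.lap ℓ *ᵥ v) x
      = ∑ k : E, ((if (G.ends k).1 = x then (1:ℝ) else 0) - if (G.ends k).2 = x then 1 else 0)
          * (v (G.ends k).1 - v (G.ends k).2) * (ℓ k)⁻¹ := by
  have hterm : ∀ y : V, G.lap ℓ x y * v y
      = ∑ k : E, (if x = y then (if ((G.ends k).1 = x ∨ (G.ends k).2 = x) ∧ (G.ends k).1 ≠ (G.ends k).2 then (ℓ k)⁻¹ else 0) * v y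
          else -((if G.ends k = (x, y) ∨ G.ends k = (y, x) then (ℓ k)⁻¹ else 0) * v y)) := by
    intro y
    by_cases hxy : x = y
    · simp [lap, Matrix.of_apply, hxy, Finset.sum_mul]
    · simp [lap, Matrix.of_apply, hxy, Finset.sum_mul, neg_mul]
  simp only [Matrix.mulVec, dotProduct]
  rw [Finset.sum_congr rfl fun y _ => hterm y, Finset.sum_comm]
  refine Finset.sum_congr rfl fun k _ => ?_
  rcases hGk : G.ends k with ⟨u, w⟩
  simp only [hGk, Prod.mk.injEq]
  by_cases hu : u = x <;> by_cases hw : w = x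
  · have huw : u = w := hu.trans hw.symm
    have h0 : (∑ y : V, (if x = y then (if (u = x ∨ w = x) ∧ u ≠ w then (ℓ k)⁻¹ else 0) * v y
        else -((if (u = x ∧ w = y) ∨ (u = y ∧ w = x) then (ℓ k)⁻¹ else 0) * v y))) = 0 := by
      refine Finset.sum_eq_zero fun y _ => ?_
      by_cases h1 : x = y
      · simp [h1, huw]
      · simp [h1, hu, hw]
    rw [h0]; simp [hu, hw]
  · have huw : u ≠ w := fun h => hw (h.symm.trans hu)
    have hpt : ∀ y ∈ (Finset.univ : Finset V), (if x = y then (if (u = x ∨ w = x) ∧ u ≠ w then (ℓ k)⁻¹ else 0) * v y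
        else -((if (u = x ∧ w = y) ∨ (u = y ∧ w = x) then (ℓ k)⁻¹ else 0) * v y))
        = (if y = x then (ℓ k)⁻¹ * v u else 0) + (if y = w then -((ℓ k)⁻¹ * v w) else 0) := by
      intro y _
      by_cases h1 : x = y
      · have hu' : u = y := hu.trans h1
        have hw' : w ≠ y := fun h => hw (h.trans h1.symm)
        simp [h1, hu', huw, Ne.symm hw', hw']
      · have h1' : y ≠ x := fun h => h1 h.symm
        by_cases h2 : y = w <;> simp [h1, h1', h2, hu, hw, huw, Ne.symm hw]
        exact fun h => absurd h.symm h2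
    rw [Finset.sum_congr rfl hpt, Finset.sum_add_distrib,
      Finset.sum_ite_eq' Finset.univ x (fun _ => (ℓ k)⁻¹ * v u),
      Finset.sum_ite_eq' Finset.univ w (fun _ => -((ℓ k)⁻¹ * v w))]
    simp [hu, hw]; ring
  · have huw : u ≠ w := fun h => hu (h.trans hw)
    have hpt : ∀ y ∈ (Finset.univ : Finset V), (if x = y then (if (u = x ∨ w = x) ∧ u ≠ w then (ℓ k)⁻¹ else 0) * v y
        else -((if (u = x ∧ w = y) ∨ (u = y ∧ w = x) then (ℓ k)⁻¹ else 0) * v y))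
        = (if y = x then (ℓ k)⁻¹ * v w else 0) + (if y = u then -((ℓ k)⁻¹ * v u) else 0) := by
      intro y _
      by_cases h1 : x = y
      · have hw' : w = y := hw.trans h1
        have hu' : u ≠ y := fun h => hu (h.trans h1.symm)
        simp [h1, hw', huw, Ne.symm hu', hu']
      · have h1' : y ≠ x := fun h => h1 h.symm
        by_cases h2 : y = u <;> simp [h1, h1', h2, hu, hw, huw, Ne.symm hu]
        exact fun h => absurd h.symm h2
    rw [Finset.sum_congr rfl hpt, Finset.sum_add_distrib,
      Finset.sum_ite_eq' Finset.univ x (fun _ => (ℓ k)⁻¹ * v w),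
      Finset.sum_ite_eq' Finset.univ u (fun _ => -((ℓ k)⁻¹ * v u))]
    simp [hu, hw]; ring
  · have h0 : (∑ y : V, (if x = y then (if (u = x ∨ w = x) ∧ u ≠ w then (ℓ k)⁻¹ else 0) * v y
        else -((if (u = x ∧ w = y) ∨ (u = y ∧ w = x) then (ℓ k)⁻¹ else 0) * v y))) = 0 := by
      refine Finset.sum_eq_zero fun y _ => ?_
      by_cases h1 : x = y
      · have hu2 : ¬u = y := h1 ▸ hu
        have hw2 : ¬w = y := h1 ▸ hw
        simp [h1, hu2, hw2]
      · simp [h1, hu, hw]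
    rw [h0]; simp [hu, hw]

theorem energy (G : WMG V E) (ℓ : E → ℝ) (v : V → ℝ) :
    v ⬝ᵥ (G.lap ℓ *ᵥ v) = ∑ k : E, (v (G.ends k).1 - v (G.ends k).2) ^ 2 * (ℓ k)⁻¹ := by
  simp only [dotProduct, lap_mulVec, Finset.mul_sum]
  rw [Finset.sum_comm]
  refine Finset.sum_congr rfl fun k _ => ?_
  have : ∀ y : V, v y * (((if (G.ends k).1 = y then (1:ℝ) else 0) - if (G.ends k).2 = y then 1 else 0)
      * (v (G.ends k).1 - v (G.ends k).2) * (ℓ k)⁻¹)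
      = ((if (G.ends k).1 = y then v y else 0) - (if (G.ends k).2 = y then v y else 0))
        * ((v (G.ends k).1 - v (G.ends k).2) * (ℓ k)⁻¹) := by
    intro y
    by_cases h1 : (G.ends k).1 = y <;> by_cases h2 : (G.ends k).2 = y <;> simp [h1, h2] <;> ring
  rw [Finset.sum_congr rfl fun y _ => this y, ← Finset.sum_mul, Finset.sum_sub_distrib]
  rw [Finset.sum_ite_eq (Finset.univ : Finset V) (G.ends k).1 v,
      Finset.sum_ite_eq (Finset.univ : Finset V) (G.ends k).2 v]
  simp; ring

theorem lap_mulVec_const (G : WMG V E) (ℓ : E → ℝ) (c : ℝ) :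
    G.lap ℓ *ᵥ (fun _ => c) = 0 := by
  funext x
  rw [lap_mulVec]
  simp

theorem sum_lap_mulVec (G : WMG V E) (ℓ : E → ℝ) (v : V → ℝ) :
    ∑ x : V, (G.lap ℓ *ᵥ v) x = 0 := by
  simp only [lap_mulVec]
  rw [Finset.sum_comm]
  refine Finset.sum_eq_zero fun k _ => ?_
  rw [← Finset.sum_mul, ← Finset.sum_mul, Finset.sum_sub_distrib]
  rw [Finset.sum_ite_eq (Finset.univ : Finset V) (G.ends k).1 (fun _ => (1:ℝ)),
      Finset.sum_ite_eq (Finset.univ : Finset V) (G.ends k).2 (fun _ => (1:ℝ))]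
  simp

/-- If the Laplacian kills `v`, then `v` is constant along edges; by connectivity it
is globally constant. -/
theorem const_of_lap_eq_zero (G : WMG V E) (hG : G.Connected) {ℓ : E → ℝ}
    (hℓ : ∀ k, 0 < ℓ k) {v : V → ℝ} (hv : G.lap ℓ *ᵥ v = 0) (a b : V) : v a = v b := by
  have hE : ∀ k : E, v (G.ends k).1 = v (G.ends k).2 := by
    have h0 : ∑ k : E, (v (G.ends k).1 - v (G.ends k).2) ^ 2 * (ℓ k)⁻¹ = 0 := by
      rw [← energy, hv]; simp
    intro k
    have hterm : ∀ k : E, 0 ≤ (v (G.ends k).1 - v (G.ends k).2) ^ 2 * (ℓ k)⁻¹ :=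
      fun k => mul_nonneg (sq_nonneg _) (inv_nonneg.2 (hℓ k).le)
    have := (Finset.sum_eq_zero_iff_of_nonneg (fun k _ => hterm k)).1 h0 k (Finset.mem_univ k)
    have h2 : (v (G.ends k).1 - v (G.ends k).2) ^ 2 = 0 := by
      rcases mul_eq_zero.1 this with h | h
      · exact h
      · exact absurd h (ne_of_gt (inv_pos.2 (hℓ k)))
    have := sq_eq_zero_iff.1 h2
    linarith
  have hstep : ∀ x y : V, G.Step Set.univ x y → v x = v y := by
    rintro x y ⟨k, -, h | h⟩
    · have := hE k; rw [h] at this; exact this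
    · have := hE k; rw [h] at this; exact this.symm
  have h := hG a b
  induction h with
  | refl => rfl
  | tail _ hstep' ih => exact ih.trans (hstep _ _ hstep')

theorem existsUnique_sol (G : WMG V E) (hG : G.Connected) {ℓ : E → ℝ}
    (hℓ : ∀ k, 0 < ℓ k) (f : V → ℝ) (hf : ∑ x, f x = 0) (b : V) :
    ∃! v : V → ℝ, G.lap ℓ *ᵥ v = f ∧ v b = 0 := by
  have hn : 0 < (Fintype.card V : ℝ) := by
    have : 0 < Fintype.card V := Fintype.card_pos_iff.2 ⟨b⟩
    exact_mod_cast this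
  set c : ℝ := (Fintype.card V : ℝ)⁻¹ with hc
  have hcpos : 0 < c := inv_pos.2 hn
  set B : Matrix V V ℝ := G.lap ℓ + Matrix.of (fun _ _ => c) with hB
  have hBv : ∀ v : V → ℝ, B *ᵥ v = G.lap ℓ *ᵥ v + (fun _ => c * ∑ x, v x) := by
    intro v; funext x
    simp [hB, Matrix.add_mulVec, Matrix.mulVec, dotProduct, Finset.mul_sum,
      add_mul, Finset.sum_add_distrib]
  have hinj : Function.Injective (Matrix.mulVecLin B) := by
    rw [← LinearMap.ker_eq_bot, LinearMap.ker_eq_bot']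
    intro v hv
    have hv' : B *ᵥ v = 0 := hv
    rw [hBv] at hv'
    have hpt : ∀ x, (G.lap ℓ *ᵥ v) x = -(c * ∑ z, v z) := by
      intro x
      have := congrFun hv' x
      simp only [Pi.add_apply, Pi.zero_apply] at this
      linarith
    have hS : v ⬝ᵥ (G.lap ℓ *ᵥ v) = -(c * (∑ z, v z) * (∑ z, v z)) := by
      rw [dotProduct, Finset.sum_congr rfl (fun x _ => by rw [hpt x]),
        ← Finset.sum_mul]
      ring
    have h1 : 0 ≤ v ⬝ᵥ (G.lap ℓ *ᵥ v) := by
      rw [energy]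
      exact Finset.sum_nonneg fun k _ => mul_nonneg (sq_nonneg _) (inv_nonneg.2 (hℓ k).le)
    have hsum0 : ∑ z, v z = 0 := by
      by_contra h
      have : 0 < c * (∑ z, v z) * (∑ z, v z) := by
        have := mul_self_pos.2 h
        nlinarith
      linarith [hS ▸ h1]
    have hlap0 : G.lap ℓ *ᵥ v = 0 := by
      funext x; rw [hpt x, hsum0]; simp
    have hconst := const_of_lap_eq_zero G hG hℓ hlap0
    have hvb : v b = 0 := by
      have h := hsum0
      rw [Finset.sum_congr rfl (fun x _ => hconst x b)] at h
      simp only [Finset.sum_const, Finset.card_univ, nsmul_eq_mul] at h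
      rcases mul_eq_zero.1 h with h' | h'
      · exact absurd h' (ne_of_gt hn)
      · exact h'
    funext x; rw [hconst x b, hvb]; rfl
  have hsurj : Function.Surjective (Matrix.mulVecLin B) :=
    LinearMap.injective_iff_surjective.1 hinj
  obtain ⟨y, hy⟩ := hsurj f
  have hy' : B *ᵥ y = f := hy
  rw [hBv] at hy'
  have hsumy : ∑ x, y x = 0 := by
    have h := congrArg (fun w : V → ℝ => ∑ x, w x) hy'
    simp only [Pi.add_apply, Finset.sum_add_distrib] at h
    rw [sum_lap_mulVec, hf] at h
    simp only [zero_add, Finset.sum_const, Finset.card_univ, nsmul_eq_mul] at h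
    rcases mul_eq_zero.1 h with h' | h'
    · exact absurd h' (ne_of_gt hn)
    · rcases mul_eq_zero.1 h' with h'' | h''
      · exact absurd h'' (ne_of_gt hcpos)
      · exact h''
  have hQy : G.lap ℓ *ᵥ y = f := by
    rw [← hy']; funext x; simp [hsumy]
  have hshift : G.lap ℓ *ᵥ (fun x => y x - y b) = f := by
    have heq : (fun x => y x - y b) = y + (fun _ => -(y b)) := by
      funext x; simp [sub_eq_add_neg]
    rw [heq, Matrix.mulVec_add, hQy, lap_mulVec_const]; simp
  refine ⟨fun x => y x - y b, ⟨hshift, by simp⟩, ?_⟩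
  rintro w ⟨hw1, hw2⟩
  have hdiff : G.lap ℓ *ᵥ (w - (fun x => y x - y b)) = 0 := by
    rw [Matrix.mulVec_sub, hw1, hshift, sub_self]
  funext x
  have h := const_of_lap_eq_zero G hG hℓ hdiff x b
  simp only [Pi.sub_apply] at h
  rw [hw2] at h
  have : w x - (y x - y b) = 0 - (y b - y b) := h
  linarith [this]

theorem res_eq_of (G : WMG V E) (hG : G.Connected) {ℓ : E → ℝ} (hℓ : ∀ k, 0 < ℓ k)
    {a b : V} {v : V → ℝ} (hv : G.lap ℓ *ᵥ v = delta a - delta b) (hvb : v b = 0) :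
    G.res ℓ a b = v a := by
  have hf : ∑ x, (delta a - delta b) x = 0 := by
    simp [delta, Finset.sum_sub_distrib]
  have hEU := existsUnique_sol G hG hℓ _ hf b
  rw [res, dif_pos hEU]
  have hspec := hEU.exists.choose_spec
  have := hEU.unique hspec ⟨hv, hvb⟩
  rw [this]

theorem res_self (G : WMG V E) (ℓ : E → ℝ) (a : V) : G.res ℓ a a = 0 := by
  rw [res]
  split
  · next h =>
    have hspec := h.exists.choose_spec
    have h0 : G.lap ℓ *ᵥ (fun _ => (0:ℝ)) = delta a - delta a ∧ (fun _ : V => (0:ℝ)) a = 0 := by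
      constructor
      · rw [sub_self]; exact lap_mulVec_const G ℓ 0
      · rfl
    have := h.unique hspec h0
    rw [this]
  · rfl

theorem update_pos {ℓ : E → ℝ} {k0 : E} (hℓ : ∀ k, k ≠ k0 → 0 < ℓ k) {t : ℝ} (ht : 0 < t) :
    ∀ k, 0 < Function.update ℓ k0 t k := by
  intro k
  rcases eq_or_ne k k0 with h | h
  · subst h; simpa using ht
  · rw [Function.update_of_ne h]; exact hℓ k h

theorem fuseV_val {p q : V} (hpq : p ≠ q) (y : V) :
    (fuseV p q hpq y).1 = if y = q then p else y := by
  rcases eq_or_ne y q with h | h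
  · simp [fuseV, h]
  · simp [fuseV, h]

theorem fuseV_of_ne {p q : V} (hpq : p ≠ q) {y : V} (h : y ≠ q) :
    fuseV p q hpq y = ⟨y, h⟩ := by simp [fuseV, h]

theorem fuseV_q {p q : V} (hpq : p ≠ q) : fuseV p q hpq q = ⟨p, hpq⟩ := by simp [fuseV]

theorem fuseV_p {p q : V} (hpq : p ≠ q) : fuseV p q hpq p = ⟨p, hpq⟩ := by
  simp [fuseV, hpq]

/-- The Laplacian of the updated length function, applied to a vector. -/
theorem lap_update_mulVec (G : WMG V E) (k0 : E) (ℓ : E → ℝ) {t : ℝ} (ht : t ≠ 0)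
    (v : V → ℝ) (x : V) :
    (G.lap (Function.update ℓ k0 t) *ᵥ v) x
      = (G.lap (Function.update ℓ k0 1) *ᵥ v) x
        + (t⁻¹ - 1) * (((if (G.ends k0).1 = x then (1:ℝ) else 0) - if (G.ends k0).2 = x then 1 else 0)
            * (v (G.ends k0).1 - v (G.ends k0).2)) := by
  rw [lap_mulVec, lap_mulVec]
  have key : ∀ k ∈ (Finset.univ : Finset E),
      ((if (G.ends k).1 = x then (1:ℝ) else 0) - if (G.ends k).2 = x then 1 else 0)
          * (v (G.ends k).1 - v (G.ends k).2) * (Function.update ℓ k0 t k)⁻¹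
      = ((if (G.ends k).1 = x then (1:ℝ) else 0) - if (G.ends k).2 = x then 1 else 0)
          * (v (G.ends k).1 - v (G.ends k).2) * (Function.update ℓ k0 1 k)⁻¹
        + (if k = k0 then (t⁻¹ - 1) * (((if (G.ends k0).1 = x then (1:ℝ) else 0) - if (G.ends k0).2 = x then 1 else 0)
            * (v (G.ends k0).1 - v (G.ends k0).2)) else 0) := by
    intro k _
    rcases eq_or_ne k k0 with h | h
    · subst h
      simp only [Function.update_self, if_true, eq_self_iff_true]
      ring
    · rw [Function.update_of_ne h, Function.update_of_ne h, if_neg h, add_zero]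
  rw [Finset.sum_congr rfl key, Finset.sum_add_distrib,
    Finset.sum_ite_eq' Finset.univ k0 (fun _ => (t⁻¹ - 1) * (((if (G.ends k0).1 = x then (1:ℝ) else 0) - if (G.ends k0).2 = x then 1 else 0)
            * (v (G.ends k0).1 - v (G.ends k0).2)))]
  simp

/-- Explicit formula for the resistance when the length of `k0` is set to `t`. -/
theorem res_update_eq (G : WMG V E) (hG : G.Connected) {k0 : E} {ℓ : E → ℝ}
    (hℓ : ∀ k, k ≠ k0 → 0 < ℓ k) (hk : (G.ends k0).1 ≠ (G.ends k0).2)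
    (a b : V) (h z : V → ℝ)
    (hh1 : G.lap (Function.update ℓ k0 1) *ᵥ h = delta a - delta b) (hh2 : h b = 0)
    (hz1 : G.lap (Function.update ℓ k0 1) *ᵥ z = delta (G.ends k0).1 - delta (G.ends k0).2)
    (hz2 : z b = 0)
    {t : ℝ} (ht : 0 < t)
    (hden : t + (1 - t) * (z (G.ends k0).1 - z (G.ends k0).2) ≠ 0) :
    G.res (Function.update ℓ k0 t) a b
      = h a - ((1 - t) * (h (G.ends k0).1 - h (G.ends k0).2)
          / (t + (1 - t) * (z (G.ends k0).1 - z (G.ends k0).2))) * z a := by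
  set X := h (G.ends k0).1 - h (G.ends k0).2 with hX
  set R := z (G.ends k0).1 - z (G.ends k0).2 with hR
  set lam := (1 - t) * X / (t + (1 - t) * R) with hlam
  have hupos := update_pos hℓ ht
  refine res_eq_of G hG hupos (v := fun y => h y - lam * z y) ?_ ?_
  · funext x
    have hsub : (fun y => h y - lam * z y) = h - lam • z := by
      funext y; simp [smul_eq_mul]
    rw [hsub, lap_update_mulVec G k0 ℓ (ne_of_gt ht)]
    rw [Matrix.mulVec_sub, Matrix.mulVec_smul, hh1, hz1]
    have hvdiff : (h - lam • z) (G.ends k0).1 - (h - lam • z) (G.ends k0).2 = X - lam * R := by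
      simp [hX, hR, smul_eq_mul]; ring
    rw [hvdiff]
    simp only [Pi.sub_apply, smul_eq_mul, Pi.smul_apply]
    have hdelta : ∀ y : V, delta y x = if y = x then (1:ℝ) else 0 := by
      intro y; simp [delta, eq_comm]
    rw [hdelta (G.ends k0).1, hdelta (G.ends k0).2]
    have hlam' : lam * (t + (1 - t) * R) = (1 - t) * X := by
      rw [hlam]; field_simp
    have hcoef : -lam + (t⁻¹ - 1) * (X - lam * R) = 0 := by
      have ht' : t ≠ 0 := ne_of_gt ht
      field_simp at hlam' ⊢
      nlinarith [hlam']
    linear_combination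
      (((if (G.ends k0).1 = x then (1:ℝ) else 0) - if (G.ends k0).2 = x then 1 else 0)) * hcoef
  · simp [hh2, hz2]

theorem contract_connected (G : WMG V E) (hG : G.Connected) (k0 : E)
    (hk : (G.ends k0).1 ≠ (G.ends k0).2) : (G.contract k0 hk).Connected := by
  have lift : ∀ x y : V, Relation.ReflTransGen (G.Step Set.univ) x y →
      Relation.ReflTransGen ((G.contract k0 hk).Step Set.univ)
        (fuseV (G.ends k0).1 (G.ends k0).2 hk x) (fuseV (G.ends k0).1 (G.ends k0).2 hk y) := by
    intro x y hxy
    induction hxy with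
    | refl => exact .refl
    | @tail m c _ hs ih =>
        rcases hs with ⟨k, -, hor⟩
        rcases eq_or_ne k k0 with hkk | hkk
        · rw [hkk] at hor
          have hmc : fuseV (G.ends k0).1 (G.ends k0).2 hk m
              = fuseV (G.ends k0).1 (G.ends k0).2 hk c := by
            rcases hor with hor | hor
            · have h1 : (G.ends k0).1 = m := by rw [hor]
              have h2 : (G.ends k0).2 = c := by rw [hor]
              rw [← h1, ← h2, fuseV_p, fuseV_q]
            · have h1 : (G.ends k0).1 = c := by rw [hor]
              have h2 : (G.ends k0).2 = m := by rw [hor]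
              rw [← h1, ← h2, fuseV_p, fuseV_q]
          rw [← hmc]; exact ih
        · refine ih.tail ⟨⟨k, hkk⟩, Set.mem_univ _, ?_⟩
          rcases hor with hor | hor
          · left; simp [contract, hor]
          · right; simp [contract, hor]
  intro a' b'
  have h1 := lift a'.1 b'.1 (hG a'.1 b'.1)
  rwa [fuseV_of_ne hk a'.2, fuseV_of_ne hk b'.2, Subtype.coe_eta, Subtype.coe_eta] at h1

/-- Row identity relating the contracted Laplacian to the original one, for vectors that
agree on the two fused vertices. -/
theorem contract_lap_mulVec (G : WMG V E) (k0 : E) (hk : (G.ends k0).1 ≠ (G.ends k0).2)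
    (ℓt : E → ℝ) {v : V → ℝ} (hv : v (G.ends k0).1 = v (G.ends k0).2)
    (x' : {y : V // y ≠ (G.ends k0).2}) :
    ((G.contract k0 hk).lap (fun k => ℓt k.1) *ᵥ (fun y => v y.1)) x'
      = (G.lap ℓt *ᵥ v) x'.1 + (if x'.1 = (G.ends k0).1 then (G.lap ℓt *ᵥ v) (G.ends k0).2 else 0) := by
  have hvv : ∀ y : V, v (fuseV (G.ends k0).1 (G.ends k0).2 hk y).1 = v y := by
    intro y
    rw [fuseV_val]
    rcases eq_or_ne y (G.ends k0).2 with h | h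
    · rw [if_pos h, h]; exact hv
    · rw [if_neg h]
  have hind : ∀ y : V, (if (fuseV (G.ends k0).1 (G.ends k0).2 hk y).1 = x'.1 then (1:ℝ) else 0)
      = (if y = x'.1 then (1:ℝ) else 0) + (if x'.1 = (G.ends k0).1 then (if y = (G.ends k0).2 then (1:ℝ) else 0) else 0) := by
    intro y
    rw [fuseV_val]
    rcases eq_or_ne y (G.ends k0).2 with h | h
    · rw [if_pos h, if_pos h]
      have : ¬ y = x'.1 := fun hc => x'.2 (hc.symm.trans h)
      rw [if_neg this, zero_add]
      rcases eq_or_ne x'.1 (G.ends k0).1 with h2 | h2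
      · rw [if_pos h2, if_pos h2.symm]
      · rw [if_neg h2, if_neg (fun hc => h2 hc.symm)]
    · rw [if_neg h]
      rcases eq_or_ne x'.1 (G.ends k0).1 with h2 | h2
      · rw [if_pos h2, if_neg h, add_zero]
      · rw [if_neg h2, add_zero]
  have main : ∀ k : E,
      ((if (fuseV (G.ends k0).1 (G.ends k0).2 hk (G.ends k).1).1 = x'.1 then (1:ℝ) else 0)
        - if (fuseV (G.ends k0).1 (G.ends k0).2 hk (G.ends k).2).1 = x'.1 then (1:ℝ) else 0)
        * (v (fuseV (G.ends k0).1 (G.ends k0).2 hk (G.ends k).1).1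
            - v (fuseV (G.ends k0).1 (G.ends k0).2 hk (G.ends k).2).1) * (ℓt k)⁻¹
      = (((if (G.ends k).1 = x'.1 then (1:ℝ) else 0) - if (G.ends k).2 = x'.1 then 1 else 0)
          * (v (G.ends k).1 - v (G.ends k).2) * (ℓt k)⁻¹)
        + (if x'.1 = (G.ends k0).1 then
            (((if (G.ends k).1 = (G.ends k0).2 then (1:ℝ) else 0) - if (G.ends k).2 = (G.ends k0).2 then 1 else 0)
              * (v (G.ends k).1 - v (G.ends k).2) * (ℓt k)⁻¹) else 0) := by
    intro k
    rw [hvv, hvv, hind, hind]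
    rcases eq_or_ne x'.1 (G.ends k0).1 with h2 | h2
    · simp only [if_pos h2]
      have e1 : (if (G.ends k).1 = x'.1 then (1:ℝ) else 0) = (if (G.ends k).1 = (G.ends k0).1 then 1 else 0) := by
        rw [h2]
      have e2 : (if (G.ends k).2 = x'.1 then (1:ℝ) else 0) = (if (G.ends k).2 = (G.ends k0).1 then 1 else 0) := by
        rw [h2]
      ring
    · simp only [if_neg h2]; ring
  calc (((G.contract k0 hk).lap (fun k => ℓt k.1)) *ᵥ (fun y => v y.1)) x'
      = ∑ k : {k : E // k ≠ k0},
          ((if (fuseV (G.ends k0).1 (G.ends k0).2 hk (G.ends k.1).1).1 = x'.1 then (1:ℝ) else 0)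
            - if (fuseV (G.ends k0).1 (G.ends k0).2 hk (G.ends k.1).2).1 = x'.1 then (1:ℝ) else 0)
            * (v (fuseV (G.ends k0).1 (G.ends k0).2 hk (G.ends k.1).1).1
                - v (fuseV (G.ends k0).1 (G.ends k0).2 hk (G.ends k.1).2).1) * (ℓt k.1)⁻¹ := by
        rw [lap_mulVec]
        refine Finset.sum_congr rfl fun k _ => ?_
        simp only [contract, Subtype.ext_iff]
    _ = ∑ k ∈ Finset.univ.erase k0,
          ((if (fuseV (G.ends k0).1 (G.ends k0).2 hk (G.ends k).1).1 = x'.1 then (1:ℝ) else 0)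
            - if (fuseV (G.ends k0).1 (G.ends k0).2 hk (G.ends k).2).1 = x'.1 then (1:ℝ) else 0)
            * (v (fuseV (G.ends k0).1 (G.ends k0).2 hk (G.ends k).1).1
                - v (fuseV (G.ends k0).1 (G.ends k0).2 hk (G.ends k).2).1) * (ℓt k)⁻¹ := by
        exact (Finset.sum_subtype (Finset.univ.erase k0) (fun k => by simp)
          (fun k : E =>
          ((if (fuseV (G.ends k0).1 (G.ends k0).2 hk (G.ends k).1).1 = x'.1 then (1:ℝ) else 0)
            - if (fuseV (G.ends k0).1 (G.ends k0).2 hk (G.ends k).2).1 = x'.1 then (1:ℝ) else 0)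
            * (v (fuseV (G.ends k0).1 (G.ends k0).2 hk (G.ends k).1).1
                - v (fuseV (G.ends k0).1 (G.ends k0).2 hk (G.ends k).2).1) * (ℓt k)⁻¹)).symm
    _ = ∑ k ∈ Finset.univ.erase k0,
          ((((if (G.ends k).1 = x'.1 then (1:ℝ) else 0) - if (G.ends k).2 = x'.1 then 1 else 0)
            * (v (G.ends k).1 - v (G.ends k).2) * (ℓt k)⁻¹)
          + (if x'.1 = (G.ends k0).1 then
              (((if (G.ends k).1 = (G.ends k0).2 then (1:ℝ) else 0) - if (G.ends k).2 = (G.ends k0).2 then 1 else 0)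
                * (v (G.ends k).1 - v (G.ends k).2) * (ℓt k)⁻¹) else 0)) := by
        exact Finset.sum_congr rfl fun k _ => main k
    _ = (G.lap ℓt *ᵥ v) x'.1 + (if x'.1 = (G.ends k0).1 then (G.lap ℓt *ᵥ v) (G.ends k0).2 else 0) := by
        have hk0term : ∀ xx : V,
            ((if (G.ends k0).1 = xx then (1:ℝ) else 0) - if (G.ends k0).2 = xx then 1 else 0)
              * (v (G.ends k0).1 - v (G.ends k0).2) * (ℓt k0)⁻¹ = 0 := by
          intro xx; rw [show v (G.ends k0).1 - v (G.ends k0).2 = 0 by rw [hv]; ring]; ring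
        rw [Finset.sum_add_distrib]
        have h1 : ∑ k ∈ Finset.univ.erase k0,
            (((if (G.ends k).1 = x'.1 then (1:ℝ) else 0) - if (G.ends k).2 = x'.1 then 1 else 0)
              * (v (G.ends k).1 - v (G.ends k).2) * (ℓt k)⁻¹) = (G.lap ℓt *ᵥ v) x'.1 := by
          rw [lap_mulVec, ← Finset.sum_erase_add _ _ (Finset.mem_univ k0), hk0term x'.1, add_zero]
        have h2 : ∑ k ∈ Finset.univ.erase k0,
            (if x'.1 = (G.ends k0).1 then
              (((if (G.ends k).1 = (G.ends k0).2 then (1:ℝ) else 0) - if (G.ends k).2 = (G.ends k0).2 then 1 else 0)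
                * (v (G.ends k).1 - v (G.ends k).2) * (ℓt k)⁻¹) else 0)
            = (if x'.1 = (G.ends k0).1 then (G.lap ℓt *ᵥ v) (G.ends k0).2 else 0) := by
          rcases eq_or_ne x'.1 (G.ends k0).1 with h | h
          · simp only [if_pos h]
            rw [lap_mulVec, ← Finset.sum_erase_add _ _ (Finset.mem_univ k0), hk0term (G.ends k0).2, add_zero]
          · simp only [if_neg h, Finset.sum_const_zero]
        rw [h1, h2]

theorem const_of_energy_zero (G : WMG V E) (hG : G.Connected) {ℓ : E → ℝ}
    (hℓ : ∀ k, 0 < ℓ k) {v : V → ℝ}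
    (h0 : ∑ k : E, (v (G.ends k).1 - v (G.ends k).2) ^ 2 * (ℓ k)⁻¹ = 0) (a b : V) :
    v a = v b := by
  have hE : ∀ k : E, v (G.ends k).1 = v (G.ends k).2 := by
    intro k
    have hterm : ∀ k : E, 0 ≤ (v (G.ends k).1 - v (G.ends k).2) ^ 2 * (ℓ k)⁻¹ :=
      fun k => mul_nonneg (sq_nonneg _) (inv_nonneg.2 (hℓ k).le)
    have := (Finset.sum_eq_zero_iff_of_nonneg (fun k _ => hterm k)).1 h0 k (Finset.mem_univ k)
    have h2 : (v (G.ends k).1 - v (G.ends k).2) ^ 2 = 0 := by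
      rcases mul_eq_zero.1 this with h | h
      · exact h
      · exact absurd h (ne_of_gt (inv_pos.2 (hℓ k)))
    have := sq_eq_zero_iff.1 h2
    linarith
  have hstep : ∀ x y : V, G.Step Set.univ x y → v x = v y := by
    rintro x y ⟨k, -, h | h⟩
    · have := hE k; rw [h] at this; exact this
    · have := hE k; rw [h] at this; exact this.symm
  have h := hG a b
  induction h with
  | refl => rfl
  | tail _ hstep' ih => exact ih.trans (hstep _ _ hstep')

theorem dot_delta_sub (z : V → ℝ) (p q : V) : z ⬝ᵥ (delta p - delta q) = z p - z q := by
  simp only [dotProduct, Pi.sub_apply, delta, mul_sub, Finset.sum_sub_distrib,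
    mul_ite, mul_one, mul_zero]
  rw [Finset.sum_ite_eq' Finset.univ p z, Finset.sum_ite_eq' Finset.univ q z]
  simp

theorem delta_fuse {p q : V} (hk : p ≠ q) (y : V) (x' : {y : V // y ≠ q}) :
    delta (fuseV p q hk y) x' = delta y x'.1 + (if x'.1 = p then delta y q else 0) := by
  simp only [delta]
  rcases eq_or_ne y q with h | h
  · subst h
    rw [fuseV_q]
    have h1 : ¬ x'.1 = y := x'.2
    rw [if_neg h1, zero_add]
    rcases eq_or_ne x'.1 p with h2 | h2
    · rw [if_pos h2, if_pos (Subtype.ext h2), if_pos rfl]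
    · rw [if_neg h2, if_neg (fun hc : x' = ⟨p, hk⟩ => h2 (congrArg Subtype.val hc))]
  · rw [fuseV_of_ne hk h]
    have hcond : (x' = (⟨y, h⟩ : {y : V // y ≠ q})) ↔ x'.1 = y := by
      constructor
      · intro hc; exact congrArg Subtype.val hc
      · intro hc; exact Subtype.ext hc
    rcases eq_or_ne x'.1 y with h2 | h2
    · rw [if_pos (hcond.2 h2), if_pos h2]
      rcases eq_or_ne x'.1 p with h3 | h3
      · rw [if_pos h3, if_neg (fun hc : q = y => h hc.symm), add_zero]
      · rw [if_neg h3, add_zero]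
    · rw [if_neg (fun hc => h2 (hcond.1 hc)), if_neg h2, zero_add]
      rcases eq_or_ne x'.1 p with h3 | h3
      · rw [if_pos h3, if_neg (fun hc : q = y => h hc.symm)]
      · rw [if_neg h3]

theorem tendsto_res (G : WMG V E) (hG : G.Connected) {k0 : E} {ℓ : E → ℝ}
    (hℓ : ∀ k, k ≠ k0 → 0 < ℓ k) (hk : (G.ends k0).1 ≠ (G.ends k0).2) (a b : V) :
    Filter.Tendsto (fun t : ℝ => G.res (Function.update ℓ k0 t) a b)
      (nhdsWithin 0 (Set.Ioi 0))
      (nhds ((G.contract k0 hk).res (fun k => ℓ k.1)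
        (fuseV (G.ends k0).1 (G.ends k0).2 hk a) (fuseV (G.ends k0).1 (G.ends k0).2 hk b))) := by
  have hℓ1 : ∀ k, 0 < Function.update ℓ k0 1 k := update_pos hℓ one_pos
  have hsum : ∀ c d : V, ∑ x, (delta c - delta d) x = 0 := by
    intro c d; simp [delta, Finset.sum_sub_distrib]
  obtain ⟨h, ⟨hh1, hh2⟩, -⟩ := existsUnique_sol G hG hℓ1 (delta a - delta b) (hsum a b) b
  obtain ⟨z, ⟨hz1, hz2⟩, -⟩ :=
    existsUnique_sol G hG hℓ1 (delta (G.ends k0).1 - delta (G.ends k0).2)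
      (hsum (G.ends k0).1 (G.ends k0).2) b
  set X := h (G.ends k0).1 - h (G.ends k0).2 with hX
  set R := z (G.ends k0).1 - z (G.ends k0).2 with hRdef
  have henergy : z ⬝ᵥ (G.lap (Function.update ℓ k0 1) *ᵥ z) = R := by
    rw [hz1, dot_delta_sub]
  have hR0 : 0 ≤ R := by
    rw [← henergy, energy]
    exact Finset.sum_nonneg fun k _ => mul_nonneg (sq_nonneg _) (inv_nonneg.2 (hℓ1 k).le)
  have hRpos : 0 < R := by
    rcases hR0.lt_or_eq with hlt | heq
    · exact hlt
    · exfalso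
      have hzero : ∑ k : E, (z (G.ends k).1 - z (G.ends k).2) ^ 2 * (Function.update ℓ k0 1 k)⁻¹ = 0 := by
        rw [← energy, henergy, ← heq]
      have hconst := const_of_energy_zero G hG hℓ1 hzero
      have hzc : z = fun _ => z b := funext fun x => hconst x b
      have : G.lap (Function.update ℓ k0 1) *ᵥ z = 0 := by
        rw [hzc]; exact lap_mulVec_const _ _ _
      rw [hz1] at this
      have := congrFun this (G.ends k0).1
      simp [delta, hk, Ne.symm hk] at this
  -- the explicit formula holds for `t ∈ (0,1)`
  have hden : ∀ t : ℝ, t ∈ Set.Ioo (0:ℝ) 1 → 0 < t + (1 - t) * R := by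
    rintro t ⟨h1, h2⟩; nlinarith
  have hmem : Set.Ioo (0:ℝ) 1 ∈ nhdsWithin (0:ℝ) (Set.Ioi 0) :=
    Ioo_mem_nhdsGT_of_mem ⟨le_refl 0, zero_lt_one⟩
  have hres : ∀ᶠ t in nhdsWithin (0:ℝ) (Set.Ioi 0),
      G.res (Function.update ℓ k0 t) a b
        = h a - ((1 - t) * X / (t + (1 - t) * R)) * z a := by
    filter_upwards [hmem] with t ht
    exact res_update_eq G hG hℓ hk a b h z hh1 hh2 hz1 hz2 ht.1 (ne_of_gt (hden t ht))
  -- the limit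
  have hlim : Filter.Tendsto (fun t : ℝ => h a - ((1 - t) * X / (t + (1 - t) * R)) * z a)
      (nhdsWithin 0 (Set.Ioi 0)) (nhds (h a - (X / R) * z a)) := by
    have hcont : ContinuousAt (fun t : ℝ => h a - ((1 - t) * X / (t + (1 - t) * R)) * z a) 0 := by
      apply ContinuousAt.sub continuousAt_const
      apply ContinuousAt.mul _ continuousAt_const
      apply ContinuousAt.div (by fun_prop) (by fun_prop)
      simpa using hRpos.ne'
    have := hcont.tendsto
    simp only [one_mul, sub_zero, zero_add, mul_one] at this
    exact (this.mono_left nhdsWithin_le_nhds).congr (fun t => rfl)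
  have hmain : Filter.Tendsto (fun t : ℝ => G.res (Function.update ℓ k0 t) a b)
      (nhdsWithin 0 (Set.Ioi 0)) (nhds (h a - (X / R) * z a)) :=
    Filter.Tendsto.congr' (Filter.EventuallyEq.symm hres) hlim
  -- identify the limit with the contracted resistance
  set c : ℝ := X / R with hc
  set w : V → ℝ := fun x => h x - c * z x with hw
  have hwpq : w (G.ends k0).1 = w (G.ends k0).2 := by
    have hcR : c * R = X := div_mul_cancel₀ X (ne_of_gt hRpos)
    have h1 : w (G.ends k0).1 - w (G.ends k0).2 = X - c * R := by
      simp only [hw]; rw [hX, hRdef]; ring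
    have h2 : X - c * R = 0 := by rw [hcR]; ring
    have := h1.trans h2
    linarith
  have hG' := contract_connected G hG k0 hk
  have hℓ' : ∀ k : {k : E // k ≠ k0}, 0 < ℓ k.1 := fun k => hℓ k.1 k.2
  have hres' : (G.contract k0 hk).res (fun k => ℓ k.1)
      (fuseV (G.ends k0).1 (G.ends k0).2 hk a) (fuseV (G.ends k0).1 (G.ends k0).2 hk b)
      = w a := by
    have hℓeq : (fun k : {k : E // k ≠ k0} => ℓ k.1)
        = fun k : {k : E // k ≠ k0} => Function.update ℓ k0 1 k.1 := by
      funext k; rw [Function.update_of_ne k.2]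
    have hlapw : G.lap (Function.update ℓ k0 1) *ᵥ w
        = (delta a - delta b) - c • (delta (G.ends k0).1 - delta (G.ends k0).2) := by
      have hwfun : w = h - c • z := by funext y; simp [hw, smul_eq_mul]
      rw [hwfun, Matrix.mulVec_sub, Matrix.mulVec_smul, hh1, hz1]
    have key : (G.contract k0 hk).lap (fun k => ℓ k.1) *ᵥ (fun y => w y.1)
        = delta (fuseV (G.ends k0).1 (G.ends k0).2 hk a)
          - delta (fuseV (G.ends k0).1 (G.ends k0).2 hk b) := by
      funext x'
      rw [hℓeq, contract_lap_mulVec G k0 hk (Function.update ℓ k0 1) hwpq x', hlapw]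
      simp only [Pi.sub_apply, Pi.smul_apply, smul_eq_mul]
      rw [delta_fuse hk a x', delta_fuse hk b x']
      have hq1 : delta (G.ends k0).2 x'.1 = 0 := by
        simp [delta, x'.2]
      have hq2 : delta (G.ends k0).1 (G.ends k0).2 = 0 := by
        simp [delta, Ne.symm hk]
      have hq3 : delta (G.ends k0).2 (G.ends k0).2 = 1 := by simp [delta]
      rcases eq_or_ne x'.1 (G.ends k0).1 with hxp | hxp
      · have hp1 : delta (G.ends k0).1 x'.1 = 1 := by simp [delta, hxp]
        rw [if_pos hxp, if_pos hxp, if_pos hxp, hq1, hp1, hq2, hq3]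
        ring
      · have hp1 : delta (G.ends k0).1 x'.1 = 0 := by simp [delta, hxp]
        rw [if_neg hxp, if_neg hxp, if_neg hxp, hq1, hp1]
        ring
    have hwb : (fun y : {y : V // y ≠ (G.ends k0).2} => w y.1)
        (fuseV (G.ends k0).1 (G.ends k0).2 hk b) = 0 := by
      have hb0 : w b = 0 := by simp [hw, hh2, hz2]
      show w (fuseV (G.ends k0).1 (G.ends k0).2 hk b).1 = 0
      rw [fuseV_val]
      rcases eq_or_ne b (G.ends k0).2 with hbq | hbq
      · rw [if_pos hbq, show w (G.ends k0).1 = w (G.ends k0).2 from hwpq, ← hbq]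
        exact hb0
      · rw [if_neg hbq]; exact hb0
    have := res_eq_of (G.contract k0 hk) hG' hℓ' key hwb
    rw [this, fuseV_val]
    rcases eq_or_ne a (G.ends k0).2 with haq | haq
    · rw [if_pos haq, show w (G.ends k0).1 = w (G.ends k0).2 from hwpq, ← haq]
    · rw [if_neg haq]
  rw [hres']
  exact hmain

theorem tendsto_res_div (G : WMG V E) (hG : G.Connected) {k0 : E} {ℓ : E → ℝ}
    (hℓ : ∀ k, k ≠ k0 → 0 < ℓ k) (hk : (G.ends k0).1 ≠ (G.ends k0).2) :
    Filter.Tendsto (fun t : ℝ => G.res (Function.update ℓ k0 t) (G.ends k0).1 (G.ends k0).2 / t)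
      (nhdsWithin 0 (Set.Ioi 0)) (nhds 1) := by
  have hℓ1 : ∀ k, 0 < Function.update ℓ k0 1 k := update_pos hℓ one_pos
  have hsum : ∑ x, (delta (G.ends k0).1 - delta (G.ends k0).2) x = 0 := by
    simp [delta, Finset.sum_sub_distrib]
  obtain ⟨z, ⟨hz1, hz2⟩, -⟩ :=
    existsUnique_sol G hG hℓ1 (delta (G.ends k0).1 - delta (G.ends k0).2) hsum (G.ends k0).2
  set R := z (G.ends k0).1 - z (G.ends k0).2 with hRdef
  have henergy : z ⬝ᵥ (G.lap (Function.update ℓ k0 1) *ᵥ z) = R := by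
    rw [hz1, dot_delta_sub]
  have hR0 : 0 ≤ R := by
    rw [← henergy, energy]
    exact Finset.sum_nonneg fun k _ => mul_nonneg (sq_nonneg _) (inv_nonneg.2 (hℓ1 k).le)
  have hRpos : 0 < R := by
    rcases hR0.lt_or_eq with hlt | heq
    · exact hlt
    · exfalso
      have hzero : ∑ k : E, (z (G.ends k).1 - z (G.ends k).2) ^ 2 * (Function.update ℓ k0 1 k)⁻¹ = 0 := by
        rw [← energy, henergy, ← heq]
      have hconst := const_of_energy_zero G hG hℓ1 hzero
      have hzc : z = fun _ => z (G.ends k0).2 := funext fun x => hconst x (G.ends k0).2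
      have : G.lap (Function.update ℓ k0 1) *ᵥ z = 0 := by
        rw [hzc]; exact lap_mulVec_const _ _ _
      rw [hz1] at this
      have := congrFun this (G.ends k0).1
      simp [delta, hk, Ne.symm hk] at this
  have hden : ∀ t : ℝ, t ∈ Set.Ioo (0:ℝ) 1 → 0 < t + (1 - t) * R := by
    rintro t ⟨h1, h2⟩; nlinarith
  have hmem : Set.Ioo (0:ℝ) 1 ∈ nhdsWithin (0:ℝ) (Set.Ioi 0) :=
    Ioo_mem_nhdsGT_of_mem ⟨le_refl 0, zero_lt_one⟩
  have hres : ∀ᶠ t in nhdsWithin (0:ℝ) (Set.Ioi 0),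
      G.res (Function.update ℓ k0 t) (G.ends k0).1 (G.ends k0).2 / t
        = R / (t + (1 - t) * R) := by
    filter_upwards [hmem] with t ht
    have hfor := res_update_eq G hG hℓ hk (G.ends k0).1 (G.ends k0).2 z z hz1 hz2 hz1 hz2
      ht.1 (ne_of_gt (hden t ht))
    have hzp : z (G.ends k0).1 = R := by rw [hRdef, hz2]; ring
    rw [hfor, hzp, hz2, sub_zero]
    have ht0 : (t:ℝ) ≠ 0 := ne_of_gt ht.1
    have hd : t + (1 - t) * R ≠ 0 := ne_of_gt (hden t ht)
    rw [div_eq_div_iff ht0 hd, sub_mul, div_mul_eq_mul_div, div_mul_eq_mul_div, mul_div_cancel_right₀ _ hd]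
    ring
  have hlim : Filter.Tendsto (fun t : ℝ => R / (t + (1 - t) * R))
      (nhdsWithin 0 (Set.Ioi 0)) (nhds 1) := by
    have hcont : ContinuousAt (fun t : ℝ => R / (t + (1 - t) * R)) 0 := by
      apply ContinuousAt.div continuousAt_const (by fun_prop)
      simpa using hRpos.ne'
    have := hcont.tendsto
    have hval : R / ((0:ℝ) + (1 - 0) * R) = 1 := by
      rw [zero_add, sub_zero, one_mul, div_self hRpos.ne']
    rw [hval] at this
    exact this.mono_left nhdsWithin_le_nhds
  exact Filter.Tendsto.congr' (Filter.EventuallyEq.symm hres) hlim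

theorem sum_split {α : Type} [Fintype α] [DecidableEq α] (f : α → ℝ) (a0 : α) :
    ∑ x : α, f x = f a0 + ∑ x : {y : α // y ≠ a0}, f x.1 := by
  rw [← Finset.sum_erase_add Finset.univ f (Finset.mem_univ a0), add_comm]
  congr 1
  exact Finset.sum_subtype (Finset.univ.erase a0) (fun k => by simp) f

theorem ind_fuse {p q : V} (hk : p ≠ q) (y : V) (x' : {y : V // y ≠ q}) :
    (if fuseV p q hk y = x' then (1:ℝ) else 0)
      = (if y = x'.1 then (1:ℝ) else 0) + (if x'.1 = p then (if y = q then (1:ℝ) else 0) else 0) := by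
  have hiff : (fuseV p q hk y = x') ↔ ((fuseV p q hk y).1 = x'.1) :=
    ⟨fun h => congrArg Subtype.val h, fun h => Subtype.ext h⟩
  have hstep : (if fuseV p q hk y = x' then (1:ℝ) else 0)
      = (if (fuseV p q hk y).1 = x'.1 then (1:ℝ) else 0) := by
    rcases eq_or_ne (fuseV p q hk y) x' with h | h
    · rw [if_pos h, if_pos (hiff.1 h)]
    · rw [if_neg h, if_neg (fun hc => h (hiff.2 hc))]
  rw [hstep, fuseV_val]
  rcases eq_or_ne y q with h | h
  · rw [if_pos h, if_pos h, if_neg (fun hc : y = x'.1 => x'.2 (hc ▸ h)), zero_add]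
    rcases eq_or_ne x'.1 p with h2 | h2
    · rw [if_pos h2.symm, if_pos h2]
    · rw [if_neg (fun hc : p = x'.1 => h2 hc.symm), if_neg h2]
  · rw [if_neg h, if_neg h]
    rcases eq_or_ne x'.1 p with h2 | h2
    · rw [if_pos h2, add_zero]
    · rw [if_neg h2, add_zero]

theorem valence_real (G : WMG V E) (a : V) :
    (G.valence a : ℝ)
      = ∑ k : E, ((if (G.ends k).1 = a then (1:ℝ) else 0) + if (G.ends k).2 = a then 1 else 0) := by
  rw [valence, Nat.cast_sum]
  refine Finset.sum_congr rfl fun k _ => ?_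
  rcases eq_or_ne (G.ends k).1 a with h1 | h1 <;> rcases eq_or_ne (G.ends k).2 a with h2 | h2 <;>
    simp [h1, h2] <;> norm_num

theorem valence_contract (G : WMG V E) (k0 : E) (hk : (G.ends k0).1 ≠ (G.ends k0).2)
    (x' : {y : V // y ≠ (G.ends k0).2}) :
    ((G.contract k0 hk).valence x' : ℝ)
      = (G.valence x'.1 : ℝ)
        + (if x'.1 = (G.ends k0).1 then (G.valence (G.ends k0).2 : ℝ) - 2 else 0) := by
  have hA : ∀ k : E, ∀ xx : V, True := fun _ _ => trivial
  rw [valence_real]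
  have hmain : ∀ k : {k : E // k ≠ k0},
      ((if ((G.contract k0 hk).ends k).1 = x' then (1:ℝ) else 0)
        + if ((G.contract k0 hk).ends k).2 = x' then 1 else 0)
      = (((if (G.ends k.1).1 = x'.1 then (1:ℝ) else 0) + if (G.ends k.1).2 = x'.1 then 1 else 0)
        + (if x'.1 = (G.ends k0).1 then
            ((if (G.ends k.1).1 = (G.ends k0).2 then (1:ℝ) else 0)
              + if (G.ends k.1).2 = (G.ends k0).2 then 1 else 0) else 0)) := by
    intro k
    have e1 : ((G.contract k0 hk).ends k).1 = fuseV (G.ends k0).1 (G.ends k0).2 hk (G.ends k.1).1 := rfl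
    have e2 : ((G.contract k0 hk).ends k).2 = fuseV (G.ends k0).1 (G.ends k0).2 hk (G.ends k.1).2 := rfl
    rw [e1, e2, ind_fuse hk (G.ends k.1).1 x', ind_fuse hk (G.ends k.1).2 x']
    rcases eq_or_ne x'.1 (G.ends k0).1 with h2 | h2
    · simp only [if_pos h2]; ring
    · simp only [if_neg h2]; ring
  rw [Finset.sum_congr rfl (fun k _ => hmain k)]
  have hsub : ∀ f : E → ℝ, (∑ k : {k : E // k ≠ k0}, f k.1) = (∑ k : E, f k) - f k0 := by
    intro f
    rw [sum_split f k0]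
    ring
  set F1 : E → ℝ := fun k => ((if (G.ends k).1 = x'.1 then (1:ℝ) else 0) + if (G.ends k).2 = x'.1 then 1 else 0) with hF1
  set F2 : E → ℝ := fun k => ((if (G.ends k).1 = (G.ends k0).2 then (1:ℝ) else 0) + if (G.ends k).2 = (G.ends k0).2 then 1 else 0) with hF2
  have hsplit : ∑ k : {k : E // k ≠ k0},
      (F1 k.1 + (if x'.1 = (G.ends k0).1 then F2 k.1 else 0))
      = ((∑ k : E, F1 k) - F1 k0) + (if x'.1 = (G.ends k0).1 then (∑ k : E, F2 k) - F2 k0 else 0) := by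
    rw [Finset.sum_add_distrib, hsub F1]
    congr 1
    rcases eq_or_ne x'.1 (G.ends k0).1 with h2 | h2
    · simp only [if_pos h2]; exact hsub F2
    · simp only [if_neg h2, Finset.sum_const_zero]
  rw [hsplit]
  have hv1 : ∑ k : E, F1 k = (G.valence x'.1 : ℝ) := (valence_real G x'.1).symm
  have hv2 : ∑ k : E, F2 k = (G.valence (G.ends k0).2 : ℝ) := (valence_real G (G.ends k0).2).symm
  rw [hv1, hv2]
  have hF2k0 : F2 k0 = 1 := by
    simp only [hF2]
    rw [if_neg hk]
    norm_num
  rcases eq_or_ne x'.1 (G.ends k0).1 with h2 | h2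
  · have hF1k0 : F1 k0 = 1 := by
      simp only [hF1]
      rw [if_pos h2.symm, if_neg (fun hc : (G.ends k0).2 = x'.1 => x'.2 hc.symm)]
      norm_num
    rw [if_pos h2, if_pos h2, hF1k0, hF2k0]
    ring
  · have hF1k0 : F1 k0 = 0 := by
      simp only [hF1]
      rw [if_neg (fun hc : (G.ends k0).1 = x'.1 => h2 hc.symm),
        if_neg (fun hc : (G.ends k0).2 = x'.1 => x'.2 hc.symm)]
      norm_num
    rw [if_neg h2, if_neg h2, hF1k0]
    ring

theorem Kdiv_contract (G : WMG V E) (k0 : E) (hk : (G.ends k0).1 ≠ (G.ends k0).2)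
    (x' : {y : V // y ≠ (G.ends k0).2}) :
    (G.contract k0 hk).Kdiv (fun _ => 0) x'
      = G.Kdiv (fun _ => 0) x'.1
        + (if x'.1 = (G.ends k0).1 then G.Kdiv (fun _ => 0) (G.ends k0).2 else 0) := by
  simp only [Kdiv, Nat.cast_zero, mul_zero, zero_add]
  rw [valence_contract G k0 hk x']
  rcases eq_or_ne x'.1 (G.ends k0).1 with h2 | h2
  · simp only [if_pos h2]; ring
  · simp only [if_neg h2]; ring

theorem sum_Kdiv_fuse (G : WMG V E) (k0 : E) (hk : (G.ends k0).1 ≠ (G.ends k0).2)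
    (F : {y : V // y ≠ (G.ends k0).2} → ℝ) :
    ∑ a : V, G.Kdiv (fun _ => 0) a * F (fuseV (G.ends k0).1 (G.ends k0).2 hk a)
      = ∑ a' : {y : V // y ≠ (G.ends k0).2}, (G.contract k0 hk).Kdiv (fun _ => 0) a' * F a' := by
  rw [sum_split (fun a => G.Kdiv (fun _ => 0) a * F (fuseV (G.ends k0).1 (G.ends k0).2 hk a)) (G.ends k0).2]
  have h1 : ∀ a' : {y : V // y ≠ (G.ends k0).2},
      G.Kdiv (fun _ => 0) a'.1 * F (fuseV (G.ends k0).1 (G.ends k0).2 hk a'.1)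
        = G.Kdiv (fun _ => 0) a'.1 * F a' := by
    intro a'
    rw [fuseV_of_ne hk a'.2, Subtype.coe_eta]
  rw [Finset.sum_congr rfl (fun a' _ => h1 a'), fuseV_q]
  have h2 : ∀ a' : {y : V // y ≠ (G.ends k0).2},
      (G.contract k0 hk).Kdiv (fun _ => 0) a' * F a'
        = G.Kdiv (fun _ => 0) a'.1 * F a'
          + (if a' = (⟨(G.ends k0).1, hk⟩ : {y : V // y ≠ (G.ends k0).2})
              then G.Kdiv (fun _ => 0) (G.ends k0).2 * F a' else 0) := by
    intro a'
    rw [Kdiv_contract G k0 hk a']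
    rcases eq_or_ne a'.1 (G.ends k0).1 with h | h
    · rw [if_pos h, if_pos (Subtype.ext h)]; ring
    · rw [if_neg h, if_neg (fun hc => h (congrArg Subtype.val hc))]; ring
  rw [Finset.sum_congr rfl (fun a' _ => h2 a'), Finset.sum_add_distrib,
    Finset.sum_ite_eq' Finset.univ (⟨(G.ends k0).1, hk⟩ : {y : V // y ≠ (G.ends k0).2})
      (fun a' => G.Kdiv (fun _ => 0) (G.ends k0).2 * F a')]
  simp only [Finset.mem_univ, if_true]
  ring

theorem genus_contract (G : WMG V E) (k0 : E) (hk : (G.ends k0).1 ≠ (G.ends k0).2) :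
    (G.contract k0 hk).genus (fun _ => 0) = G.genus (fun _ => 0) := by
  have hV : (Fintype.card {y : V // y ≠ (G.ends k0).2} : ℤ) = (Fintype.card V : ℤ) - 1 := by
    have h1 : Fintype.card {y : V // y ≠ (G.ends k0).2} = Fintype.card V - 1 := by
      have := Fintype.card_subtype_compl (fun y : V => y = (G.ends k0).2)
      rw [Fintype.card_subtype_eq] at this
      convert this using 2
    rw [h1]
    have : 1 ≤ Fintype.card V := Fintype.card_pos_iff.2 ⟨(G.ends k0).2⟩
    push_cast [this]
    ring
  have hE : (Fintype.card {k : E // k ≠ k0} : ℤ) = (Fintype.card E : ℤ) - 1 := by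
    have h1 : Fintype.card {k : E // k ≠ k0} = Fintype.card E - 1 := by
      have := Fintype.card_subtype_compl (fun k : E => k = k0)
      rw [Fintype.card_subtype_eq] at this
      convert this using 2
    rw [h1]
    have : 1 ≤ Fintype.card E := Fintype.card_pos_iff.2 ⟨k0⟩
    push_cast [this]
    ring
  simp only [genus, hV, hE, Nat.cast_zero, Finset.sum_const_zero]
  ring

theorem tendsto_Fres_ne (G : WMG V E) (hG : G.Connected) {k0 : E} {ℓ : E → ℝ}
    (hℓ : ∀ k, k ≠ k0 → 0 < ℓ k) (hk : (G.ends k0).1 ≠ (G.ends k0).2)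
    {k : E} (hkk : k ≠ k0) :
    Filter.Tendsto (fun t : ℝ => G.Fres (Function.update ℓ k0 t) k)
      (nhdsWithin 0 (Set.Ioi 0))
      (nhds ((G.contract k0 hk).Fres (fun k' => ℓ k'.1) ⟨k, hkk⟩)) := by
  have h1 := (G.tendsto_res hG hℓ hk (G.ends k).1 (G.ends k).2).div_const (ℓ k)
  have h2 := (tendsto_const_nhds (x := (1:ℝ)) (f := nhdsWithin (0:ℝ) (Set.Ioi 0))).sub h1
  have hval : (G.contract k0 hk).Fres (fun k' => ℓ k'.1) ⟨k, hkk⟩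
      = 1 - (G.contract k0 hk).res (fun k' => ℓ k'.1)
          (fuseV (G.ends k0).1 (G.ends k0).2 hk (G.ends k).1)
          (fuseV (G.ends k0).1 (G.ends k0).2 hk (G.ends k).2) / ℓ k := rfl
  rw [hval]
  refine h2.congr fun t => ?_
  rw [Fres, Function.update_of_ne hkk]

theorem tendsto_Fres_k0 (G : WMG V E) (hG : G.Connected) {k0 : E} {ℓ : E → ℝ}
    (hℓ : ∀ k, k ≠ k0 → 0 < ℓ k) (hk : (G.ends k0).1 ≠ (G.ends k0).2) :
    Filter.Tendsto (fun t : ℝ => G.Fres (Function.update ℓ k0 t) k0)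
      (nhdsWithin 0 (Set.Ioi 0)) (nhds 0) := by
  have h1 := G.tendsto_res_div hG hℓ hk
  have h2 := (tendsto_const_nhds (x := (1:ℝ)) (f := nhdsWithin (0:ℝ) (Set.Ioi 0))).sub h1
  rw [sub_self] at h2
  refine h2.congr fun t => ?_
  rw [Fres, Function.update_self]

theorem epsilon_zero {V' E' : Type} [Fintype V'] [DecidableEq V'] [Fintype E'] [DecidableEq E']
    (H : WMG V' E') (ℓh : E' → ℝ) :
    H.epsilon (fun _ => 0) ℓh
      = ((H.genus (fun _ => 0) : ℝ) - 1) / (3 * (H.genus (fun _ => 0) : ℝ))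
          * ∑ k, (H.Fres ℓh k) ^ 2 * ℓh k
        + (1 / (2 * (H.genus (fun _ => 0) : ℝ))) * ∑ a, H.Kdiv (fun _ => 0) a *
            ∑ k, H.Fres ℓh k * (H.res ℓh a (H.ends k).1 + H.res ℓh a (H.ends k).2) := by
  rw [epsilon]
  simp

end WMG

/-- Let `G` be a connected weighted multigraph in which every vertex has valence `≥ 2`,
polarized by `q ≡ 0`, of genus `g = m - n + 1 ≥ 2`, and let `e_1` be a non-loop edge.
Then for all fixed positive lengths `ℓ_2, …, ℓ_m`,
`lim_{t → 0+} φ_G(t, ℓ_2, …, ℓ_m) = φ_{G/e_1}(ℓ_2, …, ℓ_m)`,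
where `G/e_1` carries the polarization `q ≡ 0`. -/
theorem stmt_11 {V E : Type} [Fintype V] [DecidableEq V] [Fintype E] [DecidableEq E]
    (G : WMG V E) (hG : G.Connected) (hval : ∀ a, 2 ≤ G.valence a)
    (hg : 2 ≤ G.genus (fun _ => 0))
    (k0 : E) (hk : (G.ends k0).1 ≠ (G.ends k0).2)
    (ℓ : E → ℝ) (hℓ : ∀ k, k ≠ k0 → 0 < ℓ k) :
    Filter.Tendsto (fun t : ℝ => G.phi (fun _ => 0) (Function.update ℓ k0 t))
      (nhdsWithin 0 (Set.Ioi 0))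
      (nhds ((G.contract k0 hk).phi (fun _ => 0) (fun k => ℓ k.1))) := by
  classical
  have hres : ∀ a b : V, Filter.Tendsto (fun t : ℝ => G.res (Function.update ℓ k0 t) a b)
      (nhdsWithin 0 (Set.Ioi 0))
      (nhds ((G.contract k0 hk).res (fun k => ℓ k.1)
        (WMG.fuseV (G.ends k0).1 (G.ends k0).2 hk a)
        (WMG.fuseV (G.ends k0).1 (G.ends k0).2 hk b))) :=
    fun a b => G.tendsto_res hG hℓ hk a b
  have hF0 := G.tendsto_Fres_k0 hG hℓ hk
  have hFne : ∀ (k : E) (hkk : k ≠ k0),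
      Filter.Tendsto (fun t : ℝ => G.Fres (Function.update ℓ k0 t) k)
        (nhdsWithin 0 (Set.Ioi 0))
        (nhds ((G.contract k0 hk).Fres (fun k' => ℓ k'.1) ⟨k, hkk⟩)) :=
    fun k hkk => G.tendsto_Fres_ne hG hℓ hk hkk
  have hid : Filter.Tendsto (fun t : ℝ => t) (nhdsWithin (0:ℝ) (Set.Ioi 0)) (nhds 0) :=
    Filter.tendsto_id.mono_left nhdsWithin_le_nhds
  -- total length
  have hlen : Filter.Tendsto (fun t : ℝ => ∑ k, Function.update ℓ k0 t k)
      (nhdsWithin 0 (Set.Ioi 0)) (nhds (∑ k' : {k : E // k ≠ k0}, ℓ k'.1)) := by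
    have hfun : ∀ t : ℝ, (∑ k, Function.update ℓ k0 t k)
        = t + ∑ k' : {k : E // k ≠ k0}, ℓ k'.1 := by
      intro t
      rw [WMG.sum_split (Function.update ℓ k0 t) k0, Function.update_self]
      congr 1
      exact Finset.sum_congr rfl fun k' _ => Function.update_of_ne k'.2 _ _
    have h := hid.add (tendsto_const_nhds (x := ∑ k' : {k : E // k ≠ k0}, ℓ k'.1))
    rw [zero_add] at h
    exact h.congr fun t => (hfun t).symm
  -- the `F²ℓ` sum
  have hS1 : Filter.Tendsto
      (fun t : ℝ => ∑ k, (G.Fres (Function.update ℓ k0 t) k) ^ 2 * Function.update ℓ k0 t k)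
      (nhdsWithin 0 (Set.Ioi 0))
      (nhds (∑ k' : {k : E // k ≠ k0},
        ((G.contract k0 hk).Fres (fun k => ℓ k.1) k') ^ 2 * ℓ k'.1)) := by
    have hfun : ∀ t : ℝ,
        (∑ k, (G.Fres (Function.update ℓ k0 t) k) ^ 2 * Function.update ℓ k0 t k)
        = (G.Fres (Function.update ℓ k0 t) k0) ^ 2 * t
          + ∑ k' : {k : E // k ≠ k0}, (G.Fres (Function.update ℓ k0 t) k'.1) ^ 2 * ℓ k'.1 := by
      intro t
      rw [WMG.sum_split
        (fun k => (G.Fres (Function.update ℓ k0 t) k) ^ 2 * Function.update ℓ k0 t k) k0,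
        Function.update_self]
      congr 1
      exact Finset.sum_congr rfl fun k' _ => by rw [Function.update_of_ne k'.2]
    have h1 : Filter.Tendsto (fun t : ℝ => (G.Fres (Function.update ℓ k0 t) k0) ^ 2 * t)
        (nhdsWithin 0 (Set.Ioi 0)) (nhds ((0:ℝ) ^ 2 * 0)) := (hF0.pow 2).mul hid
    have h2 : Filter.Tendsto
        (fun t : ℝ => ∑ k' : {k : E // k ≠ k0}, (G.Fres (Function.update ℓ k0 t) k'.1) ^ 2 * ℓ k'.1)
        (nhdsWithin 0 (Set.Ioi 0))
        (nhds (∑ k' : {k : E // k ≠ k0},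
          ((G.contract k0 hk).Fres (fun k => ℓ k.1) ⟨k'.1, k'.2⟩) ^ 2 * ℓ k'.1)) :=
      tendsto_finset_sum _ fun k' _ => ((hFne k'.1 k'.2).pow 2).mul_const (ℓ k'.1)
    have h3 := h1.add h2
    rw [show ((0:ℝ) ^ 2 * 0) = 0 by ring, zero_add] at h3
    exact h3.congr fun t => (hfun t).symm
  -- the inner sums
  have hInner : ∀ a : V, Filter.Tendsto
      (fun t : ℝ => ∑ k, G.Fres (Function.update ℓ k0 t) k
        * (G.res (Function.update ℓ k0 t) a (G.ends k).1
            + G.res (Function.update ℓ k0 t) a (G.ends k).2))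
      (nhdsWithin 0 (Set.Ioi 0))
      (nhds (∑ k' : {k : E // k ≠ k0}, (G.contract k0 hk).Fres (fun k => ℓ k.1) k'
        * ((G.contract k0 hk).res (fun k => ℓ k.1)
              (WMG.fuseV (G.ends k0).1 (G.ends k0).2 hk a) ((G.contract k0 hk).ends k').1
            + (G.contract k0 hk).res (fun k => ℓ k.1)
              (WMG.fuseV (G.ends k0).1 (G.ends k0).2 hk a) ((G.contract k0 hk).ends k').2))) := by
    intro a
    have hfun : ∀ t : ℝ,
        (∑ k, G.Fres (Function.update ℓ k0 t) k
          * (G.res (Function.update ℓ k0 t) a (G.ends k).1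
              + G.res (Function.update ℓ k0 t) a (G.ends k).2))
        = G.Fres (Function.update ℓ k0 t) k0
            * (G.res (Function.update ℓ k0 t) a (G.ends k0).1
                + G.res (Function.update ℓ k0 t) a (G.ends k0).2)
          + ∑ k' : {k : E // k ≠ k0}, G.Fres (Function.update ℓ k0 t) k'.1
            * (G.res (Function.update ℓ k0 t) a (G.ends k'.1).1
                + G.res (Function.update ℓ k0 t) a (G.ends k'.1).2) := by
      intro t
      exact WMG.sum_split (fun k => G.Fres (Function.update ℓ k0 t) k
        * (G.res (Function.update ℓ k0 t) a (G.ends k).1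
            + G.res (Function.update ℓ k0 t) a (G.ends k).2)) k0
    have h1 := hF0.mul ((hres a (G.ends k0).1).add (hres a (G.ends k0).2))
    rw [zero_mul] at h1
    have h2 : Filter.Tendsto
        (fun t : ℝ => ∑ k' : {k : E // k ≠ k0}, G.Fres (Function.update ℓ k0 t) k'.1
          * (G.res (Function.update ℓ k0 t) a (G.ends k'.1).1
              + G.res (Function.update ℓ k0 t) a (G.ends k'.1).2))
        (nhdsWithin 0 (Set.Ioi 0))
        (nhds (∑ k' : {k : E // k ≠ k0}, (G.contract k0 hk).Fres (fun k => ℓ k.1) ⟨k'.1, k'.2⟩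
          * ((G.contract k0 hk).res (fun k => ℓ k.1)
                (WMG.fuseV (G.ends k0).1 (G.ends k0).2 hk a)
                (WMG.fuseV (G.ends k0).1 (G.ends k0).2 hk (G.ends k'.1).1)
              + (G.contract k0 hk).res (fun k => ℓ k.1)
                (WMG.fuseV (G.ends k0).1 (G.ends k0).2 hk a)
                (WMG.fuseV (G.ends k0).1 (G.ends k0).2 hk (G.ends k'.1).2)))) :=
      tendsto_finset_sum _ fun k' _ => (hFne k'.1 k'.2).mul
        ((hres a (G.ends k'.1).1).add (hres a (G.ends k'.1).2))
    have h3 := h1.add h2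
    rw [zero_add] at h3
    exact h3.congr fun t => (hfun t).symm
  -- the `K·inner` sum
  have hS2 : Filter.Tendsto
      (fun t : ℝ => ∑ a, G.Kdiv (fun _ => 0) a *
        ∑ k, G.Fres (Function.update ℓ k0 t) k
          * (G.res (Function.update ℓ k0 t) a (G.ends k).1
              + G.res (Function.update ℓ k0 t) a (G.ends k).2))
      (nhdsWithin 0 (Set.Ioi 0))
      (nhds (∑ a' : {y : V // y ≠ (G.ends k0).2}, (G.contract k0 hk).Kdiv (fun _ => 0) a' *
        ∑ k' : {k : E // k ≠ k0}, (G.contract k0 hk).Fres (fun k => ℓ k.1) k'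
          * ((G.contract k0 hk).res (fun k => ℓ k.1) a' ((G.contract k0 hk).ends k').1
              + (G.contract k0 hk).res (fun k => ℓ k.1) a' ((G.contract k0 hk).ends k').2))) := by
    have hstep := tendsto_finset_sum (Finset.univ : Finset V)
      (fun a _ => (hInner a).const_mul (G.Kdiv (fun _ => 0) a))
    have hEq := WMG.sum_Kdiv_fuse G k0 hk
      (fun a' : {y : V // y ≠ (G.ends k0).2} =>
        ∑ k' : {k : E // k ≠ k0}, (G.contract k0 hk).Fres (fun k => ℓ k.1) k'
          * ((G.contract k0 hk).res (fun k => ℓ k.1) a' ((G.contract k0 hk).ends k').1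
              + (G.contract k0 hk).res (fun k => ℓ k.1) a' ((G.contract k0 hk).ends k').2))
    rw [hEq] at hstep
    exact hstep
  -- rKK
  have hrKK : Filter.Tendsto (fun t : ℝ => G.rKK (fun _ => 0) (Function.update ℓ k0 t))
      (nhdsWithin 0 (Set.Ioi 0))
      (nhds ((G.contract k0 hk).rKK (fun _ => 0) (fun k => ℓ k.1))) := by
    have hstep : Filter.Tendsto
        (fun t : ℝ => ∑ a, ∑ b, G.Kdiv (fun _ => 0) a * G.Kdiv (fun _ => 0) b
          * G.res (Function.update ℓ k0 t) a b)
        (nhdsWithin 0 (Set.Ioi 0))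
        (nhds (∑ a, ∑ b, G.Kdiv (fun _ => 0) a * G.Kdiv (fun _ => 0) b
          * (G.contract k0 hk).res (fun k => ℓ k.1)
            (WMG.fuseV (G.ends k0).1 (G.ends k0).2 hk a)
            (WMG.fuseV (G.ends k0).1 (G.ends k0).2 hk b))) :=
      tendsto_finset_sum _ fun a _ => tendsto_finset_sum _ fun b _ =>
        (hres a b).const_mul (G.Kdiv (fun _ => 0) a * G.Kdiv (fun _ => 0) b)
    have hEq : (∑ a, ∑ b, G.Kdiv (fun _ => 0) a * G.Kdiv (fun _ => 0) b
          * (G.contract k0 hk).res (fun k => ℓ k.1)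
            (WMG.fuseV (G.ends k0).1 (G.ends k0).2 hk a)
            (WMG.fuseV (G.ends k0).1 (G.ends k0).2 hk b))
        = (G.contract k0 hk).rKK (fun _ => 0) (fun k => ℓ k.1) := by
      have e1 : ∀ a : V, (∑ b, G.Kdiv (fun _ => 0) a * G.Kdiv (fun _ => 0) b
            * (G.contract k0 hk).res (fun k => ℓ k.1)
              (WMG.fuseV (G.ends k0).1 (G.ends k0).2 hk a)
              (WMG.fuseV (G.ends k0).1 (G.ends k0).2 hk b))
          = G.Kdiv (fun _ => 0) a * (∑ b, G.Kdiv (fun _ => 0) b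
            * (G.contract k0 hk).res (fun k => ℓ k.1)
              (WMG.fuseV (G.ends k0).1 (G.ends k0).2 hk a)
              (WMG.fuseV (G.ends k0).1 (G.ends k0).2 hk b)) := by
        intro a
        rw [Finset.mul_sum]
        exact Finset.sum_congr rfl fun b _ => by ring
      rw [Finset.sum_congr rfl fun a _ => e1 a]
      have e2 : ∀ a : V, (∑ b, G.Kdiv (fun _ => 0) b
            * (G.contract k0 hk).res (fun k => ℓ k.1)
              (WMG.fuseV (G.ends k0).1 (G.ends k0).2 hk a)
              (WMG.fuseV (G.ends k0).1 (G.ends k0).2 hk b))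
          = ∑ b' : {y : V // y ≠ (G.ends k0).2}, (G.contract k0 hk).Kdiv (fun _ => 0) b'
            * (G.contract k0 hk).res (fun k => ℓ k.1)
              (WMG.fuseV (G.ends k0).1 (G.ends k0).2 hk a) b' :=
        fun a => WMG.sum_Kdiv_fuse G k0 hk
          (fun b' => (G.contract k0 hk).res (fun k => ℓ k.1)
            (WMG.fuseV (G.ends k0).1 (G.ends k0).2 hk a) b')
      rw [Finset.sum_congr rfl fun a _ => by rw [e2 a]]
      rw [WMG.sum_Kdiv_fuse G k0 hk
        (fun a' => ∑ b' : {y : V // y ≠ (G.ends k0).2}, (G.contract k0 hk).Kdiv (fun _ => 0) b'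
          * (G.contract k0 hk).res (fun k => ℓ k.1) a' b')]
      rw [WMG.rKK]
      refine Finset.sum_congr rfl fun a' _ => ?_
      rw [Finset.mul_sum]
      exact Finset.sum_congr rfl fun b' _ => by ring
    exact (hEq ▸ hstep).congr fun t => rfl
  -- epsilon
  have heps : Filter.Tendsto (fun t : ℝ => G.epsilon (fun _ => 0) (Function.update ℓ k0 t))
      (nhdsWithin 0 (Set.Ioi 0))
      (nhds ((G.contract k0 hk).epsilon (fun _ => 0) (fun k => ℓ k.1))) := by
    rw [WMG.epsilon_zero (G.contract k0 hk) (fun k => ℓ k.1), WMG.genus_contract G k0 hk]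
    have hcomb := (hS1.const_mul
        (((G.genus (fun _ => 0) : ℝ) - 1) / (3 * (G.genus (fun _ => 0) : ℝ)))).add
      (hS2.const_mul (1 / (2 * (G.genus (fun _ => 0) : ℝ))))
    exact hcomb.congr fun t => (WMG.epsilon_zero G (Function.update ℓ k0 t)).symm
  -- assembling φ
  have hphi' : (G.contract k0 hk).phi (fun _ => 0) (fun k => ℓ k.1)
      = ((5 * (G.genus (fun _ => 0) : ℝ) - 2) / (4 * ((G.genus (fun _ => 0) : ℝ) - 1)))
          * (G.contract k0 hk).epsilon (fun _ => 0) (fun k => ℓ k.1)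
        - (3 / (8 * ((G.genus (fun _ => 0) : ℝ) - 1)))
          * (G.contract k0 hk).rKK (fun _ => 0) (fun k => ℓ k.1)
        - (∑ k' : {k : E // k ≠ k0}, ℓ k'.1) / 4 := by
    simp only [WMG.phi]
    rw [WMG.genus_contract G k0 hk]
  rw [hphi']
  have hfinal := ((heps.const_mul
      ((5 * (G.genus (fun _ => 0) : ℝ) - 2) / (4 * ((G.genus (fun _ => 0) : ℝ) - 1)))).sub
    (hrKK.const_mul (3 / (8 * ((G.genus (fun _ => 0) : ℝ) - 1))))).sub (hlen.div_const 4)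
  exact hfinal.congr fun t => by simp only [WMG.phi]
end

section
/- Let g ≥ 2 be an integer and let G be the weighted multigraph with two vertices p_1, p_2 joined by two parallel edges of positive lengths ℓ_1, ℓ_2 (so the underlying metric graph is a circle of circumference ℓ_1 + ℓ_2), polarized by q(p_1) = g − 1 and q(p_2) = 0 (a polarized graph of genus g). Then φ(G) = ((g−1)/(6g))·(ℓ_1 + ℓ_2). -/
open scoped Classical
open Matrix Filter Topology

/-- The weighted multigraph with two vertices joined by two parallel edges
(a circle of circumference `ℓ_1 + ℓ_2`). -/
def twoBanana : WMG (Fin 2) (Fin 2) := ⟨fun _ => ((0 : Fin 2), (1 : Fin 2))⟩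


section Aux

lemma WMG.res_spec {V E : Type} [Fintype V] [DecidableEq V] [Fintype E] [DecidableEq E]
    (G : WMG V E) (ℓ : E → ℝ) (a b : V) (v : V → ℝ)
    (hv : G.lap ℓ *ᵥ v = WMG.delta a - WMG.delta b ∧ v b = 0)
    (huniq : ∀ w, (G.lap ℓ *ᵥ w = WMG.delta a - WMG.delta b ∧ w b = 0) → w = v) :
    G.res ℓ a b = v a := by
  have h : ∃! w : V → ℝ, G.lap ℓ *ᵥ w = WMG.delta a - WMG.delta b ∧ w b = 0 :=
    ⟨v, hv, huniq⟩
  rw [WMG.res, dif_pos h]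
  exact congrFun (huniq _ h.exists.choose_spec) a

variable (ℓ : Fin 2 → ℝ)

lemma banana_mulVec (w : Fin 2 → ℝ) (x : Fin 2) :
    (twoBanana.lap ℓ *ᵥ w) x
      = ((ℓ 0)⁻¹ + (ℓ 1)⁻¹) * (w x - w (x + 1)) := by
  fin_cases x <;>
    simp [twoBanana, WMG.lap, Matrix.mulVec, dotProduct, Fin.sum_univ_two,
      Prod.ext_iff] <;> ring

lemma banana_res01 (hℓ : ∀ k, 0 < ℓ k) :
    twoBanana.res ℓ 0 1 = ℓ 0 * ℓ 1 / (ℓ 0 + ℓ 1) := by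
  have p0 := hℓ 0
  have p1 := hℓ 1
  have h0 := p0.ne'
  have h1 := p1.ne'
  have hs : ℓ 0 + ℓ 1 ≠ 0 := by positivity
  set R := ℓ 0 * ℓ 1 / (ℓ 0 + ℓ 1) with hR
  have key : ∀ w : Fin 2 → ℝ,
      (twoBanana.lap ℓ *ᵥ w = WMG.delta 0 - WMG.delta 1 ∧ w 1 = 0) ↔
      (w 0 = R ∧ w 1 = 0) := by
    intro w
    constructor
    · rintro ⟨hw, hb⟩
      have h := congrFun hw 0
      rw [banana_mulVec] at h
      simp [WMG.delta, hb] at h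
      refine ⟨?_, hb⟩
      rw [hR]
      field_simp
      field_simp at h
      linarith [h]
    · rintro ⟨h0', h1'⟩
      refine ⟨funext fun x => ?_, h1'⟩
      rw [banana_mulVec]
      fin_cases x <;> simp [WMG.delta, h0', h1', hR] <;> field_simp <;> ring
  have := WMG.res_spec twoBanana ℓ 0 1 (fun x => if x = 0 then R else 0)
    (by rw [key]; simp)
    (by
      intro w hw
      rw [key] at hw
      funext x; fin_cases x <;> simp [hw.1, hw.2])
  simpa using this

lemma banana_res10 (hℓ : ∀ k, 0 < ℓ k) :
    twoBanana.res ℓ 1 0 = ℓ 0 * ℓ 1 / (ℓ 0 + ℓ 1) := by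
  have p0 := hℓ 0
  have p1 := hℓ 1
  have h0 := p0.ne'
  have h1 := p1.ne'
  have hs : ℓ 0 + ℓ 1 ≠ 0 := by positivity
  set R := ℓ 0 * ℓ 1 / (ℓ 0 + ℓ 1) with hR
  have key : ∀ w : Fin 2 → ℝ,
      (twoBanana.lap ℓ *ᵥ w = WMG.delta 1 - WMG.delta 0 ∧ w 0 = 0) ↔
      (w 0 = 0 ∧ w 1 = R) := by
    intro w
    constructor
    · rintro ⟨hw, hb⟩
      have h := congrFun hw 1
      rw [banana_mulVec] at h
      simp [WMG.delta, hb] at h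
      refine ⟨hb, ?_⟩
      rw [hR]
      field_simp
      field_simp at h
      linarith [h]
    · rintro ⟨h0', h1'⟩
      refine ⟨funext fun x => ?_, h0'⟩
      rw [banana_mulVec]
      fin_cases x <;> simp [WMG.delta, h0', h1', hR] <;> field_simp <;> ring
  have := WMG.res_spec twoBanana ℓ 1 0 (fun x => if x = 1 then R else 0)
    (by rw [key]; simp)
    (by
      intro w hw
      rw [key] at hw
      funext x; fin_cases x <;> simp [hw.1, hw.2])
  simpa using this

lemma banana_res_diag (hℓ : ∀ k, 0 < ℓ k) (a : Fin 2) :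
    twoBanana.res ℓ a a = 0 := by
  have p0 := hℓ 0
  have p1 := hℓ 1
  have hc : (ℓ 0)⁻¹ + (ℓ 1)⁻¹ ≠ 0 := by positivity
  have := WMG.res_spec twoBanana ℓ a a (fun _ => 0)
    (by
      constructor
      · funext x; rw [banana_mulVec]; simp [WMG.delta]
      · rfl)
    (by
      intro w hw
      obtain ⟨hw, hb⟩ := hw
      have h := congrFun hw a
      rw [banana_mulVec] at h
      simp [WMG.delta] at h
      have hEq : w a = w (a + 1) := by
        rcases h with h' | h'
        · exact absurd h' hc
        · linarith
      funext x
      have hx : x = a ∨ x = a + 1 := by fin_cases x <;> fin_cases a <;> simp <;> decide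
      rcases hx with rfl | rfl
      · exact hb
      · rw [← hEq]; exact hb)
  simpa using this

end Aux

/-- Let `g ≥ 2` and let `G` be the graph with two vertices `p_1, p_2` joined by two
parallel edges of positive lengths `ℓ_1, ℓ_2`, polarized by `q(p_1) = g - 1`,
`q(p_2) = 0` (a polarized graph of genus `g`).  Then
`φ(G) = ((g-1)/(6g)) (ℓ_1 + ℓ_2)`. -/
theorem stmt_14 (g : ℕ) (hg : 2 ≤ g) (ℓ : Fin 2 → ℝ) (hℓ : ∀ k, 0 < ℓ k) :
    twoBanana.phi (fun a => if a = 0 then g - 1 else 0) ℓ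
      = ((g : ℝ) - 1) / (6 * (g : ℝ)) * (ℓ 0 + ℓ 1) := by
  have p0 := hℓ 0
  have p1 := hℓ 1
  have h0 := p0.ne'
  have h1 := p1.ne'
  have hs : ℓ 0 + ℓ 1 ≠ 0 := by positivity
  have hgR : (0:ℝ) < (g:ℝ) := by positivity
  have hgne : (g:ℝ) ≠ 0 := hgR.ne'
  have hg1ne : (g:ℝ) - 1 ≠ 0 := by
    have : (2:ℝ) ≤ (g:ℝ) := by exact_mod_cast hg
    linarith
  have hg1 : ((g - 1 : ℕ) : ℝ) = (g : ℝ) - 1 := by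
    have h1g : 1 ≤ g := by omega
    push_cast [h1g]; ring
  set q : Fin 2 → ℕ := fun a => if a = 0 then g - 1 else 0 with hq
  have hgenus : ((twoBanana.genus q : ℤ) : ℝ) = (g : ℝ) := by
    simp only [WMG.genus, hq, Fin.sum_univ_two]
    push_cast [show 1 ≤ g by omega]
    simp
  have hval : ∀ a : Fin 2, twoBanana.valence a = 2 := by
    intro a; fin_cases a <;> simp [WMG.valence, twoBanana, Fin.sum_univ_two]
  have hK0 : twoBanana.Kdiv q 0 = 2 * ((g:ℝ) - 1) := by
    simp [WMG.Kdiv, hval, hq, hg1]; try ring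
  have hK1 : twoBanana.Kdiv q 1 = 0 := by
    simp [WMG.Kdiv, hval, hq]
  have hr01 := banana_res01 ℓ hℓ
  have hr10 := banana_res10 ℓ hℓ
  have hrd := banana_res_diag ℓ hℓ
  have hends : ∀ k : Fin 2, twoBanana.ends k = ((0 : Fin 2), (1 : Fin 2)) := fun _ => rfl
  have hF : ∀ k : Fin 2, twoBanana.Fres ℓ k = ℓ k / (ℓ 0 + ℓ 1) := by
    intro k
    rw [WMG.Fres, hends k]
    rw [hr01]
    fin_cases k <;> (simp only [Fin.zero_eta, Fin.mk_one]; field_simp; ring)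
  have hrKK : twoBanana.rKK q ℓ = 0 := by
    simp only [WMG.rKK, Fin.sum_univ_two, hK0, hK1, hrd, hr01, hr10]
    ring
  have heps : twoBanana.epsilon q ℓ = ((g:ℝ) - 1) / (3 * (g:ℝ)) * (ℓ 0 + ℓ 1) := by
    simp only [WMG.epsilon, Fin.sum_univ_two, hgenus, hK0, hK1, hF, hends,
      hr01, hr10, hrd]
    simp only [hq, hg1]
    simp only [show ((0 : Fin 2) = 0) = True by simp, show ((1 : Fin 2) = 0) = False by simp,
      if_true, if_false]
    field_simp
    ring
  rw [WMG.phi, heps, hrKK, hgenus, Fin.sum_univ_two]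
  field_simp
  ring
end
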